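/- Let T > 0, let γ ≥ 1 be real, let n ≥ 2 be an integer, and let (t_j) be the Kusuoka partition of [0,T] with parameter γ and n+1 points. Then for every j with 0 ≤ j ≤ n−2 one has t_{j+1} − t_j ≤ 2^{γ−1} γ T n^{−1} (1 − (j+1)/n)^{γ−1}. -/

import Mathlib

/-- Convexity/Bernoulli: for `0 ≤ b ≤ a`, `a > 0`, `γ ≥ 1`,
`a^γ - b^γ ≤ γ * a^(γ-1) * (a-b)`. -/
lemma rpow_sub_rpow_le_aux {a b γ : ℝ} (hb : 0 ≤ b) (hab : b ≤ a) (ha : 0 < a)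
    (hγ : 1 ≤ γ) : a ^ γ - b ^ γ ≤ γ * a ^ (γ - 1) * (a - b) := by
  have hs : -1 ≤ b / a - 1 := by
    have : 0 ≤ b / a := div_nonneg hb ha.le
    linarith
  have key : 1 + γ * (b / a - 1) ≤ (b / a) ^ γ := by
    have := one_add_mul_self_le_rpow_one_add hs hγ
    have h1 : (1 + (b / a - 1)) = b / a := by ring
    rwa [h1] at this
  have hd : (b / a) ^ γ = b ^ γ / a ^ γ := Real.div_rpow hb ha.le γ
  have haγ : (0 : ℝ) < a ^ γ := Real.rpow_pos_of_pos ha γ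
  have key2 : a ^ γ * (1 + γ * (b / a - 1)) ≤ b ^ γ := by
    calc a ^ γ * (1 + γ * (b / a - 1)) ≤ a ^ γ * (b / a) ^ γ :=
          mul_le_mul_of_nonneg_left key haγ.le
      _ = b ^ γ := by rw [hd]; field_simp
  have ha1 : a ^ (γ - 1) = a ^ γ / a := Real.rpow_sub_one ha.ne' γ
  rw [ha1]
  have heq : γ * (a ^ γ / a) * (a - b) = γ * a ^ γ * (a - b) / a := by ring
  rw [heq, le_div_iff₀ ha]
  have hexp : a ^ γ * (1 + γ * (b / a - 1)) * a
      = a ^ γ * a + γ * a ^ γ * b - γ * a ^ γ * a := by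
    field_simp; ring
  have key3 : a ^ γ * a + γ * a ^ γ * b - γ * a ^ γ * a ≤ b ^ γ * a := by
    rw [← hexp]; exact mul_le_mul_of_nonneg_right key2 ha.le
  nlinarith [key3]

/-- For the Kusuoka partition of `[0,T]` with parameter `γ ≥ 1` and `n+1` points,
defined by `t j = T * (1 - (1 - j/n)^γ)` for `j ≤ n-1` and `t n = T`, one has, for every
`0 ≤ j ≤ n-2`, `t (j+1) - t j ≤ 2^(γ-1) * γ * T * n⁻¹ * (1 - (j+1)/n)^(γ-1)`. -/
theorem stmt_0 (T γ : ℝ) (hT : 0 < T) (hγ : 1 ≤ γ) (n : ℕ) (hn : 2 ≤ n)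
    (t : ℕ → ℝ)
    (ht : ∀ j, j ≤ n - 1 → t j = T * (1 - (1 - (j : ℝ) / n) ^ γ))
    (htn : t n = T) :
    ∀ j, j ≤ n - 2 →
      t (j + 1) - t j
        ≤ (2 : ℝ) ^ (γ - 1) * γ * T * (n : ℝ)⁻¹ * (1 - ((j : ℝ) + 1) / n) ^ (γ - 1) := by
  intro j hj
  have hj2 : j + 2 ≤ n := by omega
  have hj1 : j + 1 ≤ n - 1 := by omega
  have hj0 : j ≤ n - 1 := by omega
  have hnR : (0 : ℝ) < n := by positivity
  have hjR : (j : ℝ) + 2 ≤ n := by exact_mod_cast hj2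
  set a : ℝ := 1 - (j : ℝ) / n with haa
  set b : ℝ := 1 - ((j : ℝ) + 1) / n with hbb
  have e1 : ((j : ℝ) + 1) / n = (j : ℝ) / n + 1 / n := by ring
  have e2 : ((j : ℝ) + 2) / n = (j : ℝ) / n + 1 / n + 1 / n := by ring
  have hx : ((j : ℝ) + 2) / n ≤ 1 := (div_le_one hnR).mpr hjR
  have h1n : (0 : ℝ) < 1 / n := by positivity
  have hb : 0 ≤ b := by rw [hbb, e1]; rw [e2] at hx; linarith
  have ha : 0 < a := by rw [haa]; rw [e2] at hx; linarith
  have hab : b ≤ a := by rw [haa, hbb, e1]; linarith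
  have h2b : a ≤ 2 * b := by rw [haa, hbb, e1]; rw [e2] at hx; linarith
  have hdiff : a - b = (n : ℝ)⁻¹ := by rw [haa, hbb]; field_simp; ring
  have hkey := rpow_sub_rpow_le_aux hb hab ha hγ
  have hpow : a ^ (γ - 1) ≤ 2 ^ (γ - 1) * b ^ (γ - 1) := by
    calc a ^ (γ - 1) ≤ (2 * b) ^ (γ - 1) :=
          Real.rpow_le_rpow ha.le h2b (by linarith)
      _ = 2 ^ (γ - 1) * b ^ (γ - 1) := Real.mul_rpow (by norm_num) hb
  have hta : t j = T * (1 - a ^ γ) := ht j hj0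
  have htb : t (j + 1) = T * (1 - b ^ γ) := by
    have := ht (j + 1) hj1
    rw [this, hbb]
    push_cast
    ring_nf
  rw [hta, htb]
  calc T * (1 - b ^ γ) - T * (1 - a ^ γ) = T * (a ^ γ - b ^ γ) := by ring
    _ ≤ T * (γ * a ^ (γ - 1) * (a - b)) := mul_le_mul_of_nonneg_left hkey hT.le
    _ = γ * T * (n : ℝ)⁻¹ * a ^ (γ - 1) := by rw [hdiff]; ring
    _ ≤ γ * T * (n : ℝ)⁻¹ * (2 ^ (γ - 1) * b ^ (γ - 1)) := by
        apply mul_le_mul_of_nonneg_left hpow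
        positivity
    _ = 2 ^ (γ - 1) * γ * T * (n : ℝ)⁻¹ * b ^ (γ - 1) := by ring
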